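/- Let T = (V,E) be a locally finite rooted tree with edges (κ_e)_{e∈E} i.i.d. exponentially distributed with rate 1, and suppose inf over cutsets Π of Σ_{e∈Π} 1/|e| = 0 (with the convention that 1/0 is replaced by 1, i.e., using 1/(|e|+1)). Then E[MaxFlow(0→∞, ⟨κ_e⟩)] = 0, and hence MaxFlow(0→∞, ⟨κ_e⟩) = 0 almost surely. -/

import Mathlib

open scoped ENNReal NNReal Classical

/-- A locally finite rooted tree, encoded by a parent function: every vertex eventually
reaches the root by iterating `parent`, and every vertex has finitely many children.
Non-root vertices are identified with the edge joining them to their parent. -/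
structure GrowingTree where
  V : Type
  root : V
  parent : V → V
  parent_root : parent root = root
  reaches_root : ∀ v, ∃ n, parent^[n] v = root
  locallyFinite : ∀ v, {w | parent w = v ∧ w ≠ root}.Finite

namespace GrowingTree

variable (T : GrowingTree)

/-- The children of a vertex. -/
noncomputable def children (v : T.V) : Finset T.V := (T.locallyFinite v).toFinset

/-- The depth (distance from the root) of a vertex. -/
noncomputable def depth (v : T.V) : ℕ := Nat.find (T.reaches_root v)

/-- A flow from the root to infinity: at every vertex the value (the flow through the
edge above the vertex, resp. the strength at the root) equals the total flow to the
children. -/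
def IsFlow (θ : T.V → ℝ≥0) : Prop :=
  ∀ v, θ v = ∑ w ∈ T.children v, θ w

/-- The strength of a flow: the total outflow from the root. -/
def strength (θ : T.V → ℝ≥0) : ℝ≥0 := θ T.root

/-- A flow respects the capacities `κ` if it is bounded by `κ` on every edge
(i.e. at every non-root vertex). -/
def Respects (θ : T.V → ℝ≥0) (κ : T.V → ℝ≥0) : Prop :=
  ∀ v, v ≠ T.root → θ v ≤ κ v

/-- The maximal flow from the root to infinity with respect to capacities `κ`. -/
noncomputable def maxFlow (κ : T.V → ℝ≥0) : ℝ≥0∞ :=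
  ⨆ θ : {θ : T.V → ℝ≥0 // T.IsFlow θ ∧ T.Respects θ κ}, (T.strength θ.1 : ℝ≥0∞)

/-- An infinite self-avoiding path starting at the root. -/
def IsRay (r : ℕ → T.V) : Prop :=
  r 0 = T.root ∧ ∀ n, T.parent (r (n + 1)) = r n ∧ r (n + 1) ≠ T.root

/-- A cutset separating the root from infinity: a set of edges (non-root vertices) met by
every infinite self-avoiding path starting at the root. -/
def IsCutset (C : Set T.V) : Prop :=
  T.root ∉ C ∧ ∀ r : ℕ → T.V, T.IsRay r → ∃ n, r (n + 1) ∈ C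

/-- The total capacity of a cutset. -/
noncomputable def cutsetSum (κ : T.V → ℝ≥0) (C : Set T.V) : ℝ≥0∞ :=
  ∑' v : C, (κ v.1 : ℝ≥0∞)

/-- The minimum of the capacities along the path from the root to an edge (inclusive). -/
noncomputable def minCap (κ : T.V → ℝ≥0) (v : T.V) : ℝ≥0 :=
  if h : v = T.root then κ v
  else
    (Finset.range (T.depth v)).inf'
      (by
        rw [Finset.nonempty_range_iff]
        intro h0
        apply h
        have hs : T.parent^[T.depth v] v = T.root := Nat.find_spec (T.reaches_root v)
        rw [h0] at hs
        simpa using hs)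
      (fun k => κ (T.parent^[k] v))

/-- The energy of a flow. -/
noncomputable def energy (θ : T.V → ℝ≥0) : ℝ≥0∞ :=
  ∑' v : {v : T.V // v ≠ T.root}, ((θ v.1 : ℝ≥0∞)) ^ 2

end GrowingTree

namespace GrowingTree

variable {T : GrowingTree}

lemma iterate_depth (v : T.V) : T.parent^[T.depth v] v = T.root :=
  Nat.find_spec (T.reaches_root v)

lemma ne_root_of_lt_depth {v : T.V} {k : ℕ} (h : k < T.depth v) :
    T.parent^[k] v ≠ T.root :=
  Nat.find_min (T.reaches_root v) h

lemma depth_eq_zero_iff {v : T.V} : T.depth v = 0 ↔ v = T.root := by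
  constructor
  · intro h
    have := iterate_depth v
    rwa [h, Function.iterate_zero_apply] at this
  · intro h
    subst h
    exact Nat.le_zero.mp (Nat.find_le (by simp))

lemma depth_pos {v : T.V} (h : v ≠ T.root) : 0 < T.depth v :=
  Nat.pos_of_ne_zero (fun h0 => h (depth_eq_zero_iff.mp h0))

lemma iterate_of_depth_le {v : T.V} {k : ℕ} (h : T.depth v ≤ k) :
    T.parent^[k] v = T.root := by
  obtain ⟨m, rfl⟩ := Nat.exists_eq_add_of_le h
  rw [Nat.add_comm, Function.iterate_add_apply, iterate_depth]
  induction m with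
  | zero => rfl
  | succ n ih => rw [Function.iterate_succ_apply', ih (by omega), T.parent_root]

lemma depth_iterate {v : T.V} {k : ℕ} (h : k ≤ T.depth v) :
    T.depth (T.parent^[k] v) = T.depth v - k := by
  apply le_antisymm
  · apply Nat.find_le
    rw [← Function.iterate_add_apply, Nat.sub_add_cancel h, iterate_depth]
  · have h2 : T.depth v ≤ k + T.depth (T.parent^[k] v) := by
      apply Nat.find_le
      rw [Nat.add_comm, Function.iterate_add_apply, iterate_depth]
    omega

lemma iterate_inj {v : T.V} {j k : ℕ} (hj : j < T.depth v) (hk : k < T.depth v)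
    (h : T.parent^[j] v = T.parent^[k] v) : j = k := by
  have h1 := depth_iterate (v := v) hj.le
  have h2 := depth_iterate (v := v) hk.le
  rw [h] at h1
  omega

lemma mem_children {v w : T.V} : w ∈ T.children v ↔ T.parent w = v ∧ w ≠ T.root := by
  simp [children]

lemma flow_le_parent {θ : T.V → ℝ≥0} (hθ : T.IsFlow θ) {w : T.V} (hw : w ≠ T.root) :
    θ w ≤ θ (T.parent w) := by
  rw [hθ (T.parent w)]
  exact Finset.single_le_sum (fun _ _ => zero_le) (mem_children.mpr ⟨rfl, hw⟩)

lemma flow_le_iterate {θ : T.V → ℝ≥0} (hθ : T.IsFlow θ) {v : T.V} {k : ℕ}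
    (hk : k ≤ T.depth v) : θ v ≤ θ (T.parent^[k] v) := by
  induction k with
  | zero => exact le_rfl
  | succ n ih =>
    refine le_trans (ih (by omega)) ?_
    rw [Function.iterate_succ_apply']
    exact flow_le_parent hθ (ne_root_of_lt_depth (by omega))

lemma flow_le_minCap {θ κ : T.V → ℝ≥0} (hθ : T.IsFlow θ) (hr : T.Respects θ κ)
    {v : T.V} (hv : v ≠ T.root) : θ v ≤ T.minCap κ v := by
  rw [minCap, dif_neg hv]
  apply Finset.le_inf'
  intro k hk
  rw [Finset.mem_range] at hk
  exact le_trans (flow_le_iterate hθ hk.le) (hr _ (ne_root_of_lt_depth hk))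

end GrowingTree
namespace GrowingTree

variable {T : GrowingTree}

lemma depth_parent {v : T.V} (hv : v ≠ T.root) :
    T.depth (T.parent v) = T.depth v - 1 := by
  have := depth_iterate (v := v) (k := 1) (depth_pos hv)
  rwa [Function.iterate_one] at this

lemma parent_ne_self {v : T.V} (hv : v ≠ T.root) : T.parent v ≠ v := by
  intro h
  have h1 := depth_parent hv
  rw [h] at h1
  have := depth_pos hv
  omega

/-- The set of edges strictly "inside" a cutset. -/
def cutD (C : Set T.V) : Set T.V := {v : T.V | ∀ k < T.depth v, T.parent^[k] v ∉ C}

lemma root_mem_cutD {C : Set T.V} : T.root ∈ cutD C := by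
  intro k hk
  rw [depth_eq_zero_iff.mpr rfl] at hk
  omega

lemma iterate_mem_cutD {C : Set T.V} {v : T.V} (hv : v ∈ cutD C) (m : ℕ) :
    T.parent^[m] v ∈ cutD C := by
  intro k hk
  rw [← Function.iterate_add_apply]
  by_cases hm : m ≤ T.depth v
  · have hdi := depth_iterate hm
    exact hv _ (by omega)
  · rw [iterate_of_depth_le (le_of_not_ge hm), depth_eq_zero_iff.mpr rfl] at hk
    omega

lemma notMem_cutD {C : Set T.V} {v : T.V} (hv : v ∉ cutD C) :
    ∃ k < T.depth v, T.parent^[k] v ∈ C := by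
  simpa [cutD] using hv

lemma cutD_finite {C : Set T.V} (hC : T.IsCutset C) : (cutD (T := T) C).Finite := by
  by_contra hinf
  have hinf : (cutD (T := T) C).Infinite := hinf
  set S : T.V → Set T.V := fun v => {w | w ∈ cutD C ∧ ∃ m, T.parent^[m] w = v} with hS
  have hSroot : (S T.root).Infinite := by
    apply hinf.mono
    intro w hw
    exact ⟨hw, T.depth w, iterate_depth w⟩
  have step : ∀ v, (S v).Infinite → ∃ c, T.parent c = v ∧ c ≠ T.root ∧ (S c).Infinite := by
    intro v hv
    by_contra hno
    push_neg at hno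
    have hsub : S v ⊆ insert v (⋃ c ∈ T.children v, S c) := by
      rintro w ⟨hwD, hex⟩
      by_cases hwv : w = v
      · exact Set.mem_insert_iff.mpr (Or.inl hwv)
      right
      set m := Nat.find hex with hm
      have hmspec : T.parent^[m] w = v := Nat.find_spec hex
      have hm0 : m ≠ 0 := by
        intro h0
        rw [h0, Function.iterate_zero_apply] at hmspec
        exact hwv hmspec
      have hlt : m - 1 < T.depth w := by
        by_contra hge
        push_neg at hge
        have hroot : T.parent^[m - 1] w = T.root := iterate_of_depth_le hge
        have hvroot : v = T.root := by
          rw [← hmspec, show m = (m - 1) + 1 by omega, Function.iterate_succ_apply', hroot,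
            T.parent_root]
        have hdw : T.parent^[T.depth w] w = v := by rw [iterate_depth, hvroot]
        exact Nat.find_min hex (by omega) hdw
      obtain ⟨j, hj⟩ : ∃ j, m = j + 1 := ⟨m - 1, by omega⟩
      have hltj : j < T.depth w := by omega
      refine Set.mem_biUnion (mem_children.mpr ⟨?_, ne_root_of_lt_depth hltj⟩)
        ⟨hwD, j, rfl⟩
      have h1 : T.parent^[m] w = T.parent (T.parent^[j] w) := by
        rw [hj, Function.iterate_succ_apply']
      rw [← h1]
      exact hmspec
    have hfin : (insert v (⋃ c ∈ T.children v, S c)).Finite := by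
      refine Set.Finite.insert v (Set.Finite.biUnion (T.children v).finite_toSet ?_)
      intro c hc
      exact hno c (mem_children.mp hc).1 (mem_children.mp hc).2
    exact hv (hfin.subset hsub)
  have hmemD : ∀ v, (S v).Infinite → v ∈ cutD C := by
    intro v hv
    obtain ⟨w, hwD, m, hm⟩ := hv.nonempty
    rw [← hm]
    exact iterate_mem_cutD hwD m
  let α := {v : T.V // (S v).Infinite}
  let f : α → α := fun x => ⟨(step x.1 x.2).choose, (step x.1 x.2).choose_spec.2.2⟩
  let r : ℕ → T.V := fun n => (f^[n] ⟨T.root, hSroot⟩).1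
  have hray : T.IsRay r := by
    refine ⟨rfl, fun n => ?_⟩
    have hspec := (step (f^[n] ⟨T.root, hSroot⟩).1 (f^[n] ⟨T.root, hSroot⟩).2).choose_spec
    have hr1 : r (n + 1) =
        (step (f^[n] ⟨T.root, hSroot⟩).1 (f^[n] ⟨T.root, hSroot⟩).2).choose := by
      show (f^[n + 1] ⟨T.root, hSroot⟩).1 = _
      rw [Function.iterate_succ_apply']
    rw [hr1]
    exact ⟨hspec.1, hspec.2.1⟩
  obtain ⟨n, hn⟩ := hC.2 r hray
  have hD : r (n + 1) ∈ cutD C := hmemD _ (f^[n + 1] ⟨T.root, hSroot⟩).2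
  have hne : r (n + 1) ≠ T.root := (hray.2 n).2
  exact hD 0 (depth_pos hne) hn

lemma frontier_sum {θ : T.V → ℝ≥0} (hθ : T.IsFlow θ) :
    ∀ (n : ℕ) (A : Finset T.V), A.card = n → T.root ∈ A →
      (∀ v ∈ A, v ≠ T.root → T.parent v ∈ A) →
      θ T.root = ∑ w ∈ (A.biUnion T.children) \ A, θ w := by
  intro n
  induction n using Nat.strong_induction_on with
  | _ n ih =>
  intro A hcard hrootA hclosed
  by_cases hex : ∃ v ∈ A, v ≠ T.root
  · obtain ⟨v, hvA, hmax⟩ := Finset.exists_max_image (A.filter (· ≠ T.root))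
      T.depth (by obtain ⟨v, hv1, hv2⟩ := hex; exact ⟨v, Finset.mem_filter.mpr ⟨hv1, hv2⟩⟩)
    rw [Finset.mem_filter] at hvA
    obtain ⟨hvA, hv⟩ := hvA
    have hnochild : ∀ w ∈ A, T.parent w ≠ v := by
      intro w hwA hpw
      have hwne : w ≠ T.root := by
        intro h
        rw [h, T.parent_root] at hpw
        exact hv hpw.symm
      have h1 := hmax w (Finset.mem_filter.mpr ⟨hwA, hwne⟩)
      have h2 := depth_parent hwne
      have h3 := depth_pos hwne
      rw [hpw] at h2
      omega
    set A' := A.erase v with hA'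
    have hrootA' : T.root ∈ A' := Finset.mem_erase.mpr ⟨fun h => hv h.symm, hrootA⟩
    have hclosed' : ∀ w ∈ A', w ≠ T.root → T.parent w ∈ A' := by
      intro w hwA' hwne
      have hwA := Finset.mem_of_mem_erase hwA'
      exact Finset.mem_erase.mpr ⟨hnochild w hwA, hclosed w hwA hwne⟩
    have hcard' : A'.card < n := by
      rw [← hcard, hA']
      exact Finset.card_erase_lt_of_mem hvA
    have hIH := ih A'.card hcard' A' rfl hrootA' hclosed'
    set F := (A.biUnion T.children) \ A with hF
    set F' := (A'.biUnion T.children) \ A' with hF'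
    have hC1 : T.children v ⊆ F := by
      intro w hw
      rw [mem_children] at hw
      rw [hF, Finset.mem_sdiff, Finset.mem_biUnion]
      exact ⟨⟨v, hvA, mem_children.mpr hw⟩, fun hwA => hnochild w hwA hw.1⟩
    have hC2 : F' = insert v (F \ T.children v) := by
      ext w
      constructor
      · intro hw
        rw [hF', Finset.mem_sdiff, Finset.mem_biUnion] at hw
        obtain ⟨⟨u, huA', hwu⟩, hwA'⟩ := hw
        rw [mem_children] at hwu
        rw [Finset.mem_insert]
        by_cases hwv : w = v
        · exact Or.inl hwv
        right
        rw [Finset.mem_sdiff, hF, Finset.mem_sdiff, Finset.mem_biUnion]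
        refine ⟨⟨⟨u, Finset.mem_of_mem_erase huA', mem_children.mpr hwu⟩, ?_⟩, ?_⟩
        · intro hwA
          exact hwA' (Finset.mem_erase.mpr ⟨hwv, hwA⟩)
        · intro hwc
          exact (Finset.ne_of_mem_erase huA') (by rw [← hwu.1, (mem_children.mp hwc).1])
      · intro hw
        rw [Finset.mem_insert] at hw
        rcases hw with rfl | hw
        · rw [hF', Finset.mem_sdiff, Finset.mem_biUnion]
          refine ⟨⟨T.parent w, Finset.mem_erase.mpr ⟨parent_ne_self hv, hclosed w hvA hv⟩,
            mem_children.mpr ⟨rfl, hv⟩⟩, fun h => (Finset.mem_erase.mp h).1 rfl⟩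
        · rw [Finset.mem_sdiff, hF, Finset.mem_sdiff, Finset.mem_biUnion] at hw
          obtain ⟨⟨⟨u, huA, hwu⟩, hwA⟩, hwc⟩ := hw
          have hune : u ≠ v := fun h => hwc (by rw [h] at hwu; exact hwu)
          rw [hF', Finset.mem_sdiff, Finset.mem_biUnion]
          exact ⟨⟨u, Finset.mem_erase.mpr ⟨hune, huA⟩, hwu⟩,
            fun h => hwA (Finset.mem_of_mem_erase h)⟩
    have hvnot : v ∉ F \ T.children v := by
      rw [Finset.mem_sdiff, hF, Finset.mem_sdiff]
      intro h
      exact h.1.2 hvA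
    rw [hIH, hC2, Finset.sum_insert hvnot]
    rw [← Finset.sum_sdiff hC1, hθ v]
    ring
  · push_neg at hex
    have hA : A = {T.root} := by
      apply Finset.eq_singleton_iff_unique_mem.mpr
      exact ⟨hrootA, fun v hv => hex v hv⟩
    subst hA
    rw [Finset.singleton_biUnion]
    have hdisj : Disjoint (T.children T.root) {T.root} := by
      rw [Finset.disjoint_singleton_right]
      intro h
      exact (mem_children.mp h).2 rfl
    rw [Finset.sdiff_eq_self_of_disjoint hdisj]
    exact hθ T.root

lemma maxFlow_le_tsum_minCap {C : Set T.V} (hC : T.IsCutset C) (κ : T.V → ℝ≥0) :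
    T.maxFlow κ ≤ ∑' v : C, (T.minCap κ v : ℝ≥0∞) := by
  rw [maxFlow]
  apply iSup_le
  rintro ⟨θ, hθ, hr⟩
  have hD := cutD_finite hC
  set A := hD.toFinset with hA
  have hmemA : ∀ v, v ∈ A ↔ v ∈ cutD (T := T) C := fun v => Set.Finite.mem_toFinset hD
  have hrootA : T.root ∈ A := (hmemA _).mpr root_mem_cutD
  have hclosed : ∀ v ∈ A, v ≠ T.root → T.parent v ∈ A := by
    intro v hv _
    rw [hmemA] at hv ⊢
    have := iterate_mem_cutD hv 1
    rwa [Function.iterate_one] at this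
  have hsum := frontier_sum hθ A.card A rfl hrootA hclosed
  set F := (A.biUnion T.children) \ A with hF
  have hFC : ∀ w ∈ F, w ∈ C ∧ w ≠ T.root := by
    intro w hw
    rw [hF, Finset.mem_sdiff, Finset.mem_biUnion] at hw
    obtain ⟨⟨u, huA, hwu⟩, hwA⟩ := hw
    rw [mem_children] at hwu
    rw [hmemA] at hwA
    obtain ⟨k, hk, hkC⟩ := notMem_cutD hwA
    refine ⟨?_, hwu.2⟩
    rcases Nat.eq_zero_or_pos k with rfl | hkpos
    · rwa [Function.iterate_zero_apply] at hkC
    exfalso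
    have hpw : T.parent w ∈ cutD (T := T) C := by
      rw [← hwu.1] at huA; rwa [hmemA] at huA
    have h2 := depth_parent hwu.2
    refine hpw (k - 1) (by omega) ?_
    rw [show k = (k - 1) + 1 by omega, Function.iterate_succ_apply] at hkC
    exact hkC
  calc (T.strength θ : ℝ≥0∞) = ∑ w ∈ F, (θ w : ℝ≥0∞) := by
        rw [strength, hsum]; push_cast; rfl
    _ ≤ ∑ w ∈ F, (T.minCap κ w : ℝ≥0∞) := by
        apply Finset.sum_le_sum
        intro w hw
        exact_mod_cast flow_le_minCap hθ hr (hFC w hw).2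
    _ ≤ ∑' v : C, (T.minCap κ v : ℝ≥0∞) := by
        rw [tsum_subtype C (fun v => (T.minCap κ v : ℝ≥0∞))]
        refine le_trans (le_of_eq (Finset.sum_congr rfl fun w hw => ?_))
          (ENNReal.sum_le_tsum F)
        rw [Set.indicator_of_mem (hFC w hw).1]

end GrowingTree
open MeasureTheory ProbabilityTheory Real Set

lemma expMeasure_apply (r : ℝ) {s : Set ℝ} (hs : MeasurableSet s) :
    expMeasure r s = ∫⁻ y in s, exponentialPDF r y := by
  rw [expMeasure, gammaMeasure, withDensity_apply _ hs]
  rfl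

lemma expMeasure_Iio_zero : expMeasure 1 (Iio 0) = 0 := by
  rw [expMeasure_apply 1 measurableSet_Iio]
  exact lintegral_exponentialPDF_of_nonpos le_rfl

lemma expMeasure_Ioi {t : ℝ} (ht : 0 ≤ t) :
    expMeasure 1 (Ioi t) = ENNReal.ofReal (Real.exp (-t)) := by
  have hprob : IsProbabilityMeasure (expMeasure 1) := isProbabilityMeasure_expMeasure one_pos
  have h1 : expMeasure 1 (Iic t) = ENNReal.ofReal (1 - Real.exp (-t)) := by
    rw [expMeasure_apply 1 measurableSet_Iic, lintegral_exponentialPDF_eq_antiDeriv one_pos,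
      if_pos ht, one_mul]
  have h2 : Real.exp (-t) ≤ 1 := Real.exp_le_one_iff.mpr (by linarith)
  have h3 : Ioi t = (Iic t)ᶜ := compl_Iic.symm
  rw [h3, measure_compl measurableSet_Iic (measure_ne_top _ _), measure_univ, h1]
  rw [← ENNReal.ofReal_one, ← ENNReal.ofReal_sub _ (by linarith)]
  norm_num

lemma measurable_finset_inf' {ι Ω : Type*} [MeasurableSpace Ω] {s : Finset ι}
    (hs : s.Nonempty) (f : ι → Ω → ℝ) (hf : ∀ i, Measurable (f i)) :
    Measurable (fun ω => s.inf' hs (fun i => f i ω)) := by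
  induction hs using Finset.Nonempty.cons_induction with
  | singleton a => exact hf a
  | cons a s ha hs ih => simp only [Finset.inf'_cons hs]; exact (hf a).min ih

namespace GrowingTree

lemma minCap_coe_eq {T : GrowingTree} {Ω : Type*} (κ : T.V → Ω → ℝ) {v : T.V}
    (hv : v ≠ T.root) (hne : (Finset.range (T.depth v)).Nonempty) (ω : Ω) :
    (T.minCap (fun u => (κ u ω).toNNReal) v : ℝ≥0∞) =
      ENNReal.ofReal ((Finset.range (T.depth v)).inf' hne
        (fun k => κ (T.parent^[k] v) ω)) := by
  rw [minCap, dif_neg hv]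
  have h := Finset.apply_inf'_eq_inf'_comp (s := Finset.range (T.depth v)) hne
    (f := fun k => κ (T.parent^[k] v) ω) Real.toNNReal
    (fun x y => Real.toNNReal_monotone.map_min)
  exact congrArg (fun x : ℝ≥0 => (x : ℝ≥0∞)) h.symm

variable {T : GrowingTree} {Ω : Type*} [MeasurableSpace Ω] {P : Measure Ω}
  [IsProbabilityMeasure P] {κ : T.V → Ω → ℝ}

lemma lintegral_minCap_le (hmeas : ∀ v, Measurable (κ v))
    (hindep : iIndepFun
      (fun e : {v : T.V // v ≠ T.root} => κ e.1) P)
    (hdist : ∀ v : T.V, v ≠ T.root → Measure.map (κ v) P = expMeasure 1)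
    {v : T.V} (hv : v ≠ T.root) :
    ∫⁻ ω, (T.minCap (fun u => (κ u ω).toNNReal) v : ℝ≥0∞) ∂P
      ≤ (T.depth v : ℝ≥0∞)⁻¹ := by
  have hd : 0 < T.depth v := depth_pos hv
  set d := T.depth v with hdd
  have hne : (Finset.range d).Nonempty := Finset.nonempty_range_iff.mpr (by omega)
  set g : Ω → ℝ := fun ω => (Finset.range d).inf' hne (fun k => κ (T.parent^[k] v) ω)
    with hg
  have hgmeas : Measurable g :=
    measurable_finset_inf' hne _ (fun k => hmeas _)
  have hnn : 0 ≤ᵐ[P] g := by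
    have h0 : ∀ k ∈ Finset.range d, ∀ᵐ ω ∂P, 0 ≤ κ (T.parent^[k] v) ω := by
      intro k hk
      rw [Finset.mem_range] at hk
      have hu := hdist _ (ne_root_of_lt_depth hk)
      rw [ae_iff]
      have hset : {ω | ¬ 0 ≤ κ (T.parent^[k] v) ω} = κ (T.parent^[k] v) ⁻¹' Iio 0 := by
        ext ω; simp [not_le]
      rw [hset, ← Measure.map_apply (hmeas _) measurableSet_Iio, hu, expMeasure_Iio_zero]
    filter_upwards [((Finset.range d).eventually_all).mpr h0] with ω hω
    exact Finset.le_inf' hne _ (fun k hk => hω k hk)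
  have hpt : ∀ ω, (T.minCap (fun u => (κ u ω).toNNReal) v : ℝ≥0∞) =
      ENNReal.ofReal (g ω) := fun ω => minCap_coe_eq κ hv hne ω
  simp only [hpt]
  rw [lintegral_eq_lintegral_meas_lt P hnn hgmeas.aemeasurable]
  -- tail probabilities
  have htail : ∀ t : ℝ, 0 < t →
      P {ω | t < g ω} = ENNReal.ofReal (Real.exp (-t)) ^ d := by
    intro t ht
    set S : Finset {w : T.V // w ≠ T.root} := (Finset.range d).attach.image
      (fun k => ⟨T.parent^[k.1] v,
        ne_root_of_lt_depth (Finset.mem_range.mp k.2)⟩) with hSdef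
    have hScard : S.card = d := by
      rw [hSdef, Finset.card_image_of_injOn, Finset.card_attach, Finset.card_range]
      intro j _ k _ h
      have := congrArg Subtype.val h
      exact Subtype.ext (iterate_inj (Finset.mem_range.mp j.2) (Finset.mem_range.mp k.2) this)
    have hSet : (⋂ i ∈ S, κ i.1 ⁻¹' Ioi t) = {ω | t < g ω} := by
      ext ω
      simp only [Set.mem_iInter, Set.mem_preimage, Set.mem_Ioi, Set.mem_setOf_eq, hg,
        Finset.lt_inf'_iff]
      constructor
      · intro h k hk
        exact h ⟨T.parent^[k] v, ne_root_of_lt_depth (Finset.mem_range.mp hk)⟩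
          (Finset.mem_image.mpr ⟨⟨k, hk⟩, Finset.mem_attach _ _, rfl⟩)
      · rintro h i hi
        obtain ⟨k, -, rfl⟩ := Finset.mem_image.mp hi
        exact h k.1 k.2
    rw [← hSet, hindep.meas_biInter (fun i _ => ⟨Ioi t, measurableSet_Ioi, rfl⟩)]
    have hfac : ∀ i ∈ S, P (κ i.1 ⁻¹' Ioi t) = ENNReal.ofReal (Real.exp (-t)) := by
      intro i _
      rw [← Measure.map_apply (hmeas _) measurableSet_Ioi, hdist _ i.2, expMeasure_Ioi ht.le]
    rw [Finset.prod_congr rfl hfac, Finset.prod_const, hScard]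
  have hcongr : ∫⁻ t in Ioi 0, P {ω | t < g ω}
      = ∫⁻ t in Ioi 0, ENNReal.ofReal (Real.exp (-((d : ℝ) * t))) := by
    apply setLIntegral_congr_fun measurableSet_Ioi
    intro t ht
    show P {ω | t < g ω} = _
    rw [htail t ht, ← ENNReal.ofReal_pow (Real.exp_nonneg _), ← Real.exp_nat_mul]
    ring_nf
  rw [hcongr]
  have hint : IntegrableOn (fun t => Real.exp (-((d : ℝ) * t))) (Ioi 0) := by
    simpa [neg_mul] using exp_neg_integrableOn_Ioi 0 (by positivity : (0:ℝ) < (d:ℝ))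
  rw [← ofReal_integral_eq_lintegral_ofReal hint
    (Filter.Eventually.of_forall fun t => (Real.exp_pos _).le)]
  have hval : ∫ t in Ioi 0, Real.exp (-((d : ℝ) * t)) = (d : ℝ)⁻¹ := by
    have h := integral_comp_mul_left_Ioi (fun y => Real.exp (-y)) 0
      (by positivity : (0:ℝ) < (d:ℝ))
    simp only [mul_zero] at h
    rw [h, integral_exp_neg_Ioi, neg_zero, Real.exp_zero, smul_eq_mul, mul_one]
  rw [hval, ENNReal.ofReal_inv_of_pos (by positivity), ENNReal.ofReal_natCast]

end GrowingTree

open MeasureTheory ProbabilityTheory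

/-- If the edge capacities are i.i.d. exponential with rate 1 and the infimum over cutsets
of `Σ_{e ∈ Π} 1/(|e|+1)` vanishes (note `|e| + 1 = depth` of the lower endpoint of `e`),
then the expected maximal flow from the root to infinity is zero, and hence the maximal
flow is zero almost surely. -/
theorem maxFlow_eq_zero_of_iInf_cutset (T : GrowingTree)
    {Ω : Type*} [MeasurableSpace Ω] (P : Measure Ω) [IsProbabilityMeasure P]
    (κ : T.V → Ω → ℝ) (hmeas : ∀ v, Measurable (κ v))
    (hindep : iIndepFun
      (fun e : {v : T.V // v ≠ T.root} => κ e.1) P)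
    (hdist : ∀ v : T.V, v ≠ T.root → Measure.map (κ v) P = expMeasure 1)
    (hcut : (⨅ (C : Set T.V) (_ : T.IsCutset C),
      ∑' v : C, (1 / (T.depth v.1 : ℝ≥0∞))) = 0) :
    (∫⁻ ω, T.maxFlow (fun v => Real.toNNReal (κ v ω)) ∂P) = 0 ∧
      ∀ᵐ ω ∂P, T.maxFlow (fun v => Real.toNNReal (κ v ω)) = 0 := by
  classical
  set f : Ω → ℝ≥0∞ := fun ω => T.maxFlow (fun v => Real.toNNReal (κ v ω)) with hf
  have hchoice : ∀ n : ℕ, ∃ C : Set T.V, T.IsCutset C ∧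
      (∑' v : C, (1 / (T.depth v.1 : ℝ≥0∞))) < ((n : ℝ≥0∞) + 1)⁻¹ := by
    intro n
    have hpos : (0 : ℝ≥0∞) < ((n : ℝ≥0∞) + 1)⁻¹ :=
      ENNReal.inv_pos.mpr (by simp)
    have h2 : (⨅ (C : Set T.V) (_ : T.IsCutset C),
        ∑' v : C, (1 / (T.depth v.1 : ℝ≥0∞))) < ((n : ℝ≥0∞) + 1)⁻¹ := by
      rw [hcut]; exact hpos
    obtain ⟨C, hC⟩ := iInf_lt_iff.mp h2
    obtain ⟨hCcut, hClt⟩ := iInf_lt_iff.mp hC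
    exact ⟨C, hCcut, hClt⟩
  choose Cs hCs hCs_lt using hchoice
  have hne_root : ∀ n (v : (Cs n : Set T.V)), (v : T.V) ≠ T.root :=
    fun n v h => (hCs n).1 (h ▸ v.2)
  have hcount : ∀ n, (Cs n).Countable := by
    intro n
    have hne_top : (∑' v : Cs n, (1 / (T.depth v.1 : ℝ≥0∞))) ≠ ⊤ :=
      ((hCs_lt n).trans_le le_top).ne
    have hsupp := Summable.countable_support_ennreal hne_top
    have huniv : (Function.support fun v : Cs n => (1 / (T.depth v.1 : ℝ≥0∞)))
        = Set.univ := by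
      ext v
      simp [Function.mem_support, ENNReal.div_eq_zero_iff]
    rw [huniv, Set.countable_univ_iff] at hsupp
    exact Set.countable_coe_iff.mp hsupp
  set G : ℕ → Ω → ℝ≥0∞ := fun n ω =>
    ∑' v : Cs n, (T.minCap (fun u => Real.toNNReal (κ u ω)) v.1 : ℝ≥0∞) with hG
  have hfle : ∀ n ω, f ω ≤ G n ω := fun n ω =>
    GrowingTree.maxFlow_le_tsum_minCap (hCs n) _
  have hmc_meas : ∀ (v : T.V), v ≠ T.root →
      Measurable (fun ω => (T.minCap (fun u => Real.toNNReal (κ u ω)) v : ℝ≥0∞)) := by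
    intro v hv
    have hne : (Finset.range (T.depth v)).Nonempty :=
      Finset.nonempty_range_iff.mpr (Nat.pos_iff_ne_zero.mp (GrowingTree.depth_pos hv))
    have heq : (fun ω => (T.minCap (fun u => Real.toNNReal (κ u ω)) v : ℝ≥0∞))
        = fun ω => ENNReal.ofReal ((Finset.range (T.depth v)).inf' hne
            (fun k => κ (T.parent^[k] v) ω)) :=
      funext fun ω => GrowingTree.minCap_coe_eq κ hv hne ω
    rw [heq]
    exact (measurable_finset_inf' hne _ (fun k => hmeas _)).ennreal_ofReal
  have hGmeas : ∀ n, Measurable (G n) := by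
    intro n
    have := (hcount n).to_subtype
    exact Measurable.ennreal_tsum (fun v => hmc_meas v.1 (hne_root n v))
  have hGint : ∀ n, ∫⁻ ω, G n ω ∂P ≤ ((n : ℝ≥0∞) + 1)⁻¹ := by
    intro n
    have := (hcount n).to_subtype
    rw [hG, lintegral_tsum (fun v => (hmc_meas v.1 (hne_root n v)).aemeasurable)]
    refine le_trans (ENNReal.tsum_le_tsum fun v => ?_) (hCs_lt n).le
    rw [one_div]
    exact GrowingTree.lintegral_minCap_le hmeas hindep hdist (hne_root n v)
  set H : Ω → ℝ≥0∞ := fun ω => ⨅ n, G n ω with hH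
  have hHmeas : Measurable H := Measurable.iInf hGmeas
  have hHint : ∫⁻ ω, H ω ∂P = 0 := by
    refine le_antisymm ?_ zero_le
    have hle : ∀ n : ℕ, ∫⁻ ω, H ω ∂P ≤ ((n : ℝ≥0∞) + 1)⁻¹ := fun n =>
      le_trans (lintegral_mono fun ω => iInf_le _ n) (hGint n)
    by_contra hne0
    rw [not_le] at hne0
    obtain ⟨n, hn⟩ := ENNReal.exists_inv_nat_lt (ne_of_gt hne0)
    have : ((n : ℝ≥0∞) + 1)⁻¹ ≤ ((n : ℝ≥0∞))⁻¹ :=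
      ENNReal.inv_le_inv' (by simp)
    exact absurd ((hle n).trans this) (not_le.mpr hn)
  have hH0 : ∀ᵐ ω ∂P, H ω = 0 := (lintegral_eq_zero_iff hHmeas).mp hHint
  have hfH : ∀ ω, f ω ≤ H ω := fun ω => le_iInf fun n => hfle n ω
  constructor
  · refine le_antisymm ?_ zero_le
    calc ∫⁻ ω, f ω ∂P ≤ ∫⁻ ω, H ω ∂P := lintegral_mono hfH
      _ = 0 := hHint
  · filter_upwards [hH0] with ω hω
    exact le_antisymm (le_trans (hfH ω) hω.le) zero_le
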